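/- Let t₁, t₂ ∈ ℝ, ρ_{t₁,t₂} = (1/2)(L_{[t₁,t₁+1]} × δ₀ + δ₀ × L_{[t₂,t₂+1]}), and T(λ₁,λ₂) := λ₁(2t₁+1) − λ₂(2t₂+1). Then (λ₁, λ₂) ∈ ℝ² \ {(0,0)} is a zero of the Fourier transform of ρ_{t₁,t₂} if and only if e^{πi(λ₁(2t₁+1) − λ₂(2t₂+1))} · sin(πλ₁)/(πλ₁) + sin(πλ₂)/(πλ₂) = 0, where sin(πx)/(πx) is interpreted as 1 when x = 0; consequently, every such zero satisfies either (λ₁, λ₂) ∈ (ℤ \ {0})², or T(λ₁,λ₂) ∈ ℤ together with (−1)^{T(λ₁,λ₂)} sin(πλ₁)/(πλ₁) + sin(πλ₂)/(πλ₂) = 0. -/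

import Mathlib

open MeasureTheory Filter Set
open scoped Real ENNReal

/-- The additive measure of Lebesgue type
`ρ_{t₁,t₂} = (1/2)(L_{[t₁,t₁+1]} × δ₀ + δ₀ × L_{[t₂,t₂+1]})` on `ℝ²`. -/
noncomputable def rho (t₁ t₂ : ℝ) : Measure (ℝ × ℝ) :=
  (1 / 2 : ℝ≥0∞) • ((volume.restrict (Icc t₁ (t₁ + 1))).prod (Measure.dirac 0)
    + (Measure.dirac (0 : ℝ)).prod (volume.restrict (Icc t₂ (t₂ + 1))))

/-- `Λ` is a spectrum of the measure `ρ` on `ℝ²`: it is countable, the exponentials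
`e_λ(x) = e^{2πi λ·x}`, `λ ∈ Λ`, are pairwise orthogonal in `L²(ρ)`, and they are total:
any `f ∈ L²(ρ)` orthogonal to all of them vanishes `ρ`-a.e. -/
def IsSpectrumOf (Λ : Set (ℝ × ℝ)) (ρ : Measure (ℝ × ℝ)) : Prop :=
  Λ.Countable ∧
  (∀ a ∈ Λ, ∀ b ∈ Λ, a ≠ b →
    ∫ x : ℝ × ℝ,
      Complex.exp ((2 * π * ((a.1 - b.1) * x.1 + (a.2 - b.2) * x.2) : ℝ) * Complex.I) ∂ρ = 0) ∧
  (∀ f : ℝ × ℝ → ℂ, MemLp f 2 ρ →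
    (∀ a ∈ Λ,
      ∫ x : ℝ × ℝ,
        f x * Complex.exp ((-2 * π * (a.1 * x.1 + a.2 * x.2) : ℝ) * Complex.I) ∂ρ = 0) →
    ∀ᵐ x ∂ρ, f x = 0)

/-- The Fourier transform of `ρ_{t₁,t₂}`: `ρ̂(ξ) = ∫ e^{-2πi ξ·x} dρ(x)`. -/
noncomputable def rhoHat (t₁ t₂ : ℝ) (ξ : ℝ × ℝ) : ℂ :=
  ∫ x : ℝ × ℝ,
    Complex.exp ((-2 * π * (ξ.1 * x.1 + ξ.2 * x.2) : ℝ) * Complex.I) ∂(rho t₁ t₂)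

/-- Normalized sinc: `sin(πx)/(πx)`, interpreted as `1` at `x = 0`. -/
noncomputable def nsinc (x : ℝ) : ℝ := if x = 0 then 1 else Real.sin (π * x) / (π * x)

lemma oneDim (l t : ℝ) :
    ∫ x in Icc t (t + 1), Complex.exp ((-2 * π * (l * x) : ℝ) * Complex.I)
      = Complex.exp ((-(π * (l * (2 * t + 1))) : ℝ) * Complex.I) * (nsinc l : ℂ) := by
  rw [integral_Icc_eq_integral_Ioc, ← intervalIntegral.integral_of_le (by linarith : t ≤ t + 1)]
  rcases eq_or_ne l 0 with rfl | hl
  · simp [nsinc]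
  · have hπl : π * l ≠ 0 := mul_ne_zero Real.pi_ne_zero hl
    have hc : ((-2 * π * l : ℝ) : ℂ) * Complex.I ≠ 0 := by
      simp [Complex.I_ne_zero, Real.pi_ne_zero, hl]
    have hcongr : ∀ x : ℝ, Complex.exp (((-2 * π * (l * x) : ℝ) : ℂ) * Complex.I)
        = Complex.exp ((((-2 * π * l : ℝ) : ℂ) * Complex.I) * x) := by
      intro x; congr 1; push_cast; ring
    rw [intervalIntegral.integral_congr (fun x _ => hcongr x),
      integral_exp_mul_complex hc]
    set A := Complex.exp ((-(π * l) : ℝ) * Complex.I) with hA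
    set B := Complex.exp ((-2 * π * l * t : ℝ) * Complex.I) with hB
    have hAne : A ≠ 0 := Complex.exp_ne_zero _
    have e1 : Complex.exp ((((-2 * π * l : ℝ)) : ℂ) * Complex.I * (t+1:ℝ)) = B * A * A := by
      rw [hA, hB, ← Complex.exp_add, ← Complex.exp_add]; congr 1; push_cast; ring
    have e2 : Complex.exp ((((-2 * π * l : ℝ)) : ℂ) * Complex.I * (t:ℝ)) = B := by
      rw [hB]; congr 1; push_cast; ring
    have e3 : Complex.exp ((-(π * (l * (2 * t + 1))) : ℝ) * Complex.I) = B * A := by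
      rw [hA, hB, ← Complex.exp_add]; congr 1; push_cast; ring
    have e4 : Complex.sin ((π : ℂ) * l) = (A - A⁻¹) * Complex.I / 2 := by
      rw [Complex.sin, hA, ← Complex.exp_neg]
      push_cast; ring_nf
    rw [e1, e2, e3, nsinc, if_neg hl]
    push_cast
    rw [e4]
    have hI := Complex.I_sq
    have hπlC : ((π : ℂ) * l) ≠ 0 := by exact_mod_cast hπl
    have hd : -(2 * (π:ℂ) * l * Complex.I) ≠ 0 := by
      simp [Complex.I_ne_zero, Real.pi_ne_zero, hl, Complex.ofReal_ne_zero]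
    field_simp
    linear_combination (B * (l:ℂ)⁻¹ - B * A ^ 2 * (l:ℂ)⁻¹) * Complex.I_sq

lemma rhoHat_eq (t₁ t₂ l₁ l₂ : ℝ) :
    rhoHat t₁ t₂ (l₁, l₂)
      = (1 / 2 : ℂ) * (Complex.exp ((-(π * (l₁ * (2 * t₁ + 1))) : ℝ) * Complex.I) * (nsinc l₁ : ℂ)
        + Complex.exp ((-(π * (l₂ * (2 * t₂ + 1))) : ℝ) * Complex.I) * (nsinc l₂ : ℂ)) := by
  set f : ℝ × ℝ → ℂ := fun x =>
    Complex.exp ((-2 * π * (l₁ * x.1 + l₂ * x.2) : ℝ) * Complex.I) with hf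
  have hfc : Continuous f := by
    apply Complex.continuous_exp.comp
    fun_prop
  have hμ₁ : IsFiniteMeasure ((volume.restrict (Icc t₁ (t₁ + 1))).prod (Measure.dirac (0:ℝ))) :=
    by infer_instance
  have hμ₂ : IsFiniteMeasure ((Measure.dirac (0 : ℝ)).prod (volume.restrict (Icc t₂ (t₂ + 1)))) :=
    by infer_instance
  have hnorm : ∀ x : ℝ × ℝ, ‖f x‖ ≤ 1 := by
    intro x; rw [hf]; exact le_of_eq (Complex.norm_exp_ofReal_mul_I _)
  have hint : ∀ (μ : Measure (ℝ × ℝ)) [IsFiniteMeasure μ], Integrable f μ := by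
    intro μ _
    exact (integrable_const (1:ℝ)).mono' hfc.aestronglyMeasurable (ae_of_all _ hnorm)
  have key : rhoHat t₁ t₂ (l₁, l₂)
      = (1/2 : ℂ) * ((∫ x, f x ∂((volume.restrict (Icc t₁ (t₁ + 1))).prod (Measure.dirac 0)))
        + ∫ x, f x ∂((Measure.dirac (0 : ℝ)).prod (volume.restrict (Icc t₂ (t₂ + 1))))) := by
    rw [rhoHat, rho, integral_smul_measure, integral_add_measure (hint _) (hint _)]
    norm_num [mul_add]
  rw [key]
  congr 1
  congr 1
  · rw [Measure.prod_dirac, integral_map (by fun_prop) hfc.aestronglyMeasurable]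
    have : ∀ x : ℝ, f (x, 0) = Complex.exp ((-2 * π * (l₁ * x) : ℝ) * Complex.I) := by
      intro x; rw [hf]; norm_num
    rw [integral_congr_ae (ae_of_all _ this)]
    exact oneDim l₁ t₁
  · rw [Measure.dirac_prod, integral_map (by fun_prop) hfc.aestronglyMeasurable]
    have : ∀ x : ℝ, f (0, x) = Complex.exp ((-2 * π * (l₂ * x) : ℝ) * Complex.I) := by
      intro x; rw [hf]; norm_num
    rw [integral_congr_ae (ae_of_all _ this)]
    exact oneDim l₂ t₂

lemma nsinc_eq_zero_iff (l : ℝ) : nsinc l = 0 ↔ ∃ m : ℤ, m ≠ 0 ∧ l = m := by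
  rcases eq_or_ne l 0 with rfl | hl
  · simp only [nsinc, if_pos rfl]
    constructor
    · intro h; norm_num at h
    · rintro ⟨m, hm, h⟩
      exact absurd (by exact_mod_cast h.symm) hm
  · rw [nsinc, if_neg hl, div_eq_zero_iff]
    have hπl : π * l ≠ 0 := mul_ne_zero Real.pi_ne_zero hl
    simp only [hπl, or_false]
    rw [Real.sin_eq_zero_iff]
    constructor
    · rintro ⟨n, hn⟩
      refine ⟨n, ?_, ?_⟩
      · rintro rfl; apply hl
        have := hn; push_cast at this
        have := mul_left_cancel₀ Real.pi_ne_zero (by linarith : π * (0:ℝ) = π * l)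
        linarith
      · have h2 : π * (n : ℝ) = π * l := by linarith [hn]
        exact (mul_left_cancel₀ Real.pi_ne_zero h2).symm
    · rintro ⟨m, hm, rfl⟩
      exact ⟨m, by ring⟩

theorem stmt19 (t₁ t₂ l₁ l₂ : ℝ) (hne : (l₁, l₂) ≠ (0, 0)) :
    (rhoHat t₁ t₂ (l₁, l₂) = 0 ↔
      Complex.exp ((π * (l₁ * (2 * t₁ + 1) - l₂ * (2 * t₂ + 1)) : ℝ) * Complex.I) *
          (nsinc l₁ : ℂ) + (nsinc l₂ : ℂ) = 0) ∧
    (rhoHat t₁ t₂ (l₁, l₂) = 0 →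
      (((∃ m : ℤ, m ≠ 0 ∧ l₁ = (m : ℝ)) ∧ (∃ m : ℤ, m ≠ 0 ∧ l₂ = (m : ℝ))) ∨
        (∃ m : ℤ, l₁ * (2 * t₁ + 1) - l₂ * (2 * t₂ + 1) = (m : ℝ) ∧
          (-1 : ℝ) ^ m * nsinc l₁ + nsinc l₂ = 0))) := by
  set A : ℝ := π * (l₁ * (2 * t₁ + 1)) with hA
  set B : ℝ := π * (l₂ * (2 * t₂ + 1)) with hB
  set s₁ : ℝ := nsinc l₁ with hs₁
  set s₂ : ℝ := nsinc l₂ with hs₂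
  have hAB : (π * (l₁ * (2 * t₁ + 1) - l₂ * (2 * t₂ + 1)) : ℝ) = A - B := by rw [hA, hB]; ring
  -- step 1 : rhoHat = 0 ↔ exp(-A i) s₁ + exp(-B i) s₂ = 0
  have step1 : rhoHat t₁ t₂ (l₁, l₂) = 0 ↔
      Complex.exp ((-A : ℝ) * Complex.I) * (s₁ : ℂ)
        + Complex.exp ((-B : ℝ) * Complex.I) * (s₂ : ℂ) = 0 := by
    rw [rhoHat_eq]
    constructor
    · intro h
      rcases mul_eq_zero.mp h with h | h
      · norm_num at h
      · exact h
    · intro h; rw [h, mul_zero]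
  -- step 2 : conjugation
  have step2 : (Complex.exp ((-A : ℝ) * Complex.I) * (s₁ : ℂ)
        + Complex.exp ((-B : ℝ) * Complex.I) * (s₂ : ℂ) = 0) ↔
      (Complex.exp ((A : ℝ) * Complex.I) * (s₁ : ℂ)
        + Complex.exp ((B : ℝ) * Complex.I) * (s₂ : ℂ) = 0) := by
    rw [← star_eq_zero (R := ℂ)]
    constructor <;> intro h <;> rw [← h] <;>
      simp [star_add, star_mul', Complex.star_def, map_mul, ← Complex.exp_conj,
        Complex.conj_ofReal, Complex.conj_I, mul_comm]
  -- step 3 : multiply by exp(-B i)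
  have hfactor : Complex.exp ((A - B : ℝ) * Complex.I) * (s₁ : ℂ) + (s₂ : ℂ)
      = Complex.exp ((-B : ℝ) * Complex.I) *
        (Complex.exp ((A : ℝ) * Complex.I) * (s₁ : ℂ) + Complex.exp ((B : ℝ) * Complex.I) * (s₂ : ℂ)) := by
    rw [mul_add, ← mul_assoc, ← mul_assoc, ← Complex.exp_add, ← Complex.exp_add]
    have e1 : ((-B : ℝ) : ℂ) * Complex.I + ((A:ℝ):ℂ) * Complex.I = ((A - B : ℝ) : ℂ) * Complex.I := by
      push_cast; ring
    have e2 : ((-B : ℝ) : ℂ) * Complex.I + ((B:ℝ):ℂ) * Complex.I = 0 := by push_cast; ring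
    rw [e1, e2, Complex.exp_zero, one_mul]
  have step3 : (Complex.exp ((A : ℝ) * Complex.I) * (s₁ : ℂ)
        + Complex.exp ((B : ℝ) * Complex.I) * (s₂ : ℂ) = 0) ↔
      Complex.exp ((A - B : ℝ) * Complex.I) * (s₁ : ℂ) + (s₂ : ℂ) = 0 := by
    rw [hfactor, mul_eq_zero]
    simp [Complex.exp_ne_zero]
  have main : rhoHat t₁ t₂ (l₁, l₂) = 0 ↔
      Complex.exp ((A - B : ℝ) * Complex.I) * (s₁ : ℂ) + (s₂ : ℂ) = 0 := by
    rw [step1, step2, step3]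
  constructor
  · rw [main, hAB]
  · rw [main]
    intro h
    -- split into re and im
    rw [Complex.exp_mul_I, ← Complex.ofReal_cos, ← Complex.ofReal_sin] at h
    have him : Real.sin (A - B) * s₁ = 0 := by
      have := congrArg Complex.im h
      simp only [Complex.add_im, Complex.mul_im, Complex.mul_re, Complex.add_re,
        Complex.ofReal_im, Complex.ofReal_re, Complex.I_re, Complex.I_im, Complex.zero_im] at this
      linarith
    have hre : Real.cos (A - B) * s₁ + s₂ = 0 := by
      have := congrArg Complex.re h
      simp only [Complex.add_im, Complex.mul_im, Complex.mul_re, Complex.add_re,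
        Complex.ofReal_im, Complex.ofReal_re, Complex.I_re, Complex.I_im, Complex.zero_re] at this
      linarith
    rcases eq_or_ne s₁ 0 with h1 | h1
    · left
      have h2 : s₂ = 0 := by rw [h1] at hre; linarith [hre]
      exact ⟨(nsinc_eq_zero_iff l₁).mp h1, (nsinc_eq_zero_iff l₂).mp h2⟩
    · right
      have hsin : Real.sin (A - B) = 0 := by
        rcases mul_eq_zero.mp him with h' | h'
        · exact h'
        · exact absurd h' h1
      rw [Real.sin_eq_zero_iff] at hsin
      obtain ⟨n, hn⟩ := hsin
      refine ⟨n, ?_, ?_⟩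
      · have : A - B = π * (l₁ * (2 * t₁ + 1) - l₂ * (2 * t₂ + 1)) := hAB.symm
        have h' : (n : ℝ) * π = π * (l₁ * (2 * t₁ + 1) - l₂ * (2 * t₂ + 1)) := by
          rw [hn, this]
        have h2 : π * (l₁ * (2 * t₁ + 1) - l₂ * (2 * t₂ + 1)) = π * (n : ℝ) := by linarith
        exact mul_left_cancel₀ Real.pi_ne_zero h2
      · have hcos : Real.cos (A - B) = (-1 : ℝ) ^ n := by
          rw [← hn]
          simpa using Real.cos_add_int_mul_pi 0 n
        rw [hcos] at hre
        exact hre
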